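/- Let M : Fin n → Matrix (Fin n) (Fin n) ℝ be a family of symmetric real matrices and set P(α) := ∑_j α j • M j for α : Fin n → ℝ. Suppose d : (Fin n → ℝ) → ℝ and v : (Fin n → ℝ) → (Fin n → ℝ) are Fréchet differentiable at a point û and satisfy, for all α in some neighborhood of û, the eigenvalue equation P(α) v(α) = d(α) • v(α) and the normalization ‖v(α)‖₂ = 1 (Euclidean norm). Then for every index j, the partial derivative of d at û in the j-th coordinate direction equals v(û)ᵀ (M j) v(û) (first-variation formula for the eigenvalues of the stochastic Galerkin matrix, established in the proof of Lemma 2.1). -/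

import Mathlib

open Matrix

private lemma dot_symm_mulVec {n : ℕ} {M : Matrix (Fin n) (Fin n) ℝ} (hM : M.IsSymm)
    (u x : Fin n → ℝ) : u ⬝ᵥ (M *ᵥ x) = (M *ᵥ u) ⬝ᵥ x := by
  rw [dotProduct_mulVec, ← mulVec_transpose, hM.eq]

noncomputable def dotCLM {n : ℕ} (w : Fin n → ℝ) : (Fin n → ℝ) →L[ℝ] ℝ :=
  LinearMap.toContinuousLinearMap
    { toFun := fun x => w ⬝ᵥ x
      map_add' := fun x y => by simp [dotProduct, mul_add, Finset.sum_add_distrib]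
      map_smul' := fun c x => by
        simp [dotProduct, Finset.mul_sum, mul_comm, mul_left_comm] }

@[simp] lemma dotCLM_apply {n : ℕ} (w x : Fin n → ℝ) : dotCLM w x = w ⬝ᵥ x := rfl

private lemma sum_smul_mulVec {n : ℕ} (M : Fin n → Matrix (Fin n) (Fin n) ℝ)
    (α x : Fin n → ℝ) : (∑ j, α j • M j) *ᵥ x = ∑ j, α j • (M j *ᵥ x) := by
  ext i
  simp only [mulVec, dotProduct, Finset.sum_apply, Matrix.sum_apply, Matrix.smul_apply,
    Pi.smul_apply, smul_eq_mul, Finset.sum_mul, Finset.mul_sum, mul_assoc]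
  rw [Finset.sum_comm]

private lemma dot_sum {n : ℕ} (u : Fin n → ℝ) (f : Fin n → Fin n → ℝ) :
    u ⬝ᵥ (∑ j, f j) = ∑ j, u ⬝ᵥ f j := by
  simp only [dotProduct, Finset.sum_apply, Finset.mul_sum]
  rw [Finset.sum_comm]

private lemma phi_eq {n : ℕ} (M : Fin n → Matrix (Fin n) (Fin n) ℝ)
    (hMsymm : ∀ j, (M j).IsSymm) (u α x : Fin n → ℝ) :
    ∑ j, α j * ((M j *ᵥ u) ⬝ᵥ x) = u ⬝ᵥ ((∑ j, α j • M j) *ᵥ x) := by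
  rw [sum_smul_mulVec, dot_sum]
  refine Finset.sum_congr rfl fun j _ => ?_
  rw [dotProduct_smul, smul_eq_mul, dot_symm_mulVec (hMsymm j)]

/-- First-variation formula for the eigenvalues of the stochastic Galerkin matrix
(established in the proof of Lemma 2.1): if `P α = ∑ j, α j • M j` with symmetric `M j`,
and near `uh` the differentiable functions `d`, `v` satisfy the eigenvalue equation
`P α *ᵥ v α = d α • v α` with Euclidean normalization `‖v α‖₂ = 1`, then
`∂_{uh_j} d(uh) = v(uh)ᵀ (M j) v(uh)`. -/
theorem haar_sg_eigenvalue_first_variation {n : ℕ} (hn : 1 ≤ n)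
    (M : Fin n → Matrix (Fin n) (Fin n) ℝ)
    (hMsymm : ∀ j, (M j).IsSymm)
    (P : (Fin n → ℝ) → Matrix (Fin n) (Fin n) ℝ)
    (hP : ∀ α, P α = ∑ j, α j • M j)
    (d : (Fin n → ℝ) → ℝ) (v : (Fin n → ℝ) → (Fin n → ℝ))
    (uh : Fin n → ℝ)
    (hd : DifferentiableAt ℝ d uh) (hv : DifferentiableAt ℝ v uh)
    (heig : ∀ᶠ α in nhds uh, (P α).mulVec (v α) = d α • v α)
    (hnorm : ∀ᶠ α in nhds uh, Real.sqrt (∑ i, (v α i) ^ 2) = 1) :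
    ∀ j : Fin n, fderiv ℝ d uh (Pi.single j 1) = v uh ⬝ᵥ (M j).mulVec (v uh) := by
  intro j
  set u : Fin n → ℝ := v uh with hu
  set L : (Fin n → ℝ) →L[ℝ] (Fin n → ℝ) := fderiv ℝ v uh with hL
  have hvF : HasFDerivAt v L uh := hv.hasFDerivAt
  have hdF : HasFDerivAt d (fderiv ℝ d uh) uh := hd.hasFDerivAt
  -- φ and ψ
  set φ : (Fin n → ℝ) → ℝ := fun α => ∑ j', α j' * (dotCLM (M j' *ᵥ u) (v α)) with hφ
  set ψ : (Fin n → ℝ) → ℝ := fun α => d α * (dotCLM u (v α)) with hψ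
  set Dφ : (Fin n → ℝ) →L[ℝ] ℝ :=
    ∑ j', (uh j' • ((dotCLM (M j' *ᵥ u)).comp L) +
      (dotCLM (M j' *ᵥ u) u) • (ContinuousLinearMap.proj j')) with hDφ
  set Dψ : (Fin n → ℝ) →L[ℝ] ℝ :=
    (d uh • ((dotCLM u).comp L) + (dotCLM u u) • (fderiv ℝ d uh)) with hDψ
  have hφF : HasFDerivAt φ Dφ uh := by
    refine HasFDerivAt.fun_sum fun j' _ => ?_
    exact ((ContinuousLinearMap.proj j' : (Fin n → ℝ) →L[ℝ] ℝ).hasFDerivAt).mul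
      (((dotCLM (M j' *ᵥ u)).hasFDerivAt).comp uh hvF)
  have hψF : HasFDerivAt ψ Dψ uh :=
    hdF.mul (((dotCLM u).hasFDerivAt).comp uh hvF)
  have heq : φ =ᶠ[nhds uh] ψ := by
    filter_upwards [heig] with α hα
    simp only [hφ, hψ, dotCLM_apply]
    rw [phi_eq M hMsymm u α (v α), ← hP, hα, dotProduct_smul, smul_eq_mul]
  have hDeq : Dφ = Dψ := by
    rw [← hφF.fderiv, ← hψF.fderiv]
    exact Filter.EventuallyEq.fderiv_eq heq
  have hDe := congrArg (fun (T : (Fin n → ℝ) →L[ℝ] ℝ) => T (Pi.single j 1)) hDeq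
  simp only [hDφ, hDψ, ContinuousLinearMap.sum_apply, ContinuousLinearMap.add_apply,
    ContinuousLinearMap.smul_apply, ContinuousLinearMap.comp_apply,
    ContinuousLinearMap.proj_apply, dotCLM_apply, smul_eq_mul] at hDe
  -- normalization at the point
  have hnorm1 : u ⬝ᵥ u = 1 := by
    have h1 := hnorm.self_of_nhds
    rw [Real.sqrt_eq_one] at h1
    simpa [dotProduct, sq] using h1
  -- eigen-equation at the point
  have heig1 : P uh *ᵥ u = d uh • u := heig.self_of_nhds
  -- simplify the first sum in hDe
  have hsum1 : ∑ j', uh j' * ((M j' *ᵥ u) ⬝ᵥ L (Pi.single j 1))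
      = d uh * (u ⬝ᵥ L (Pi.single j 1)) := by
    rw [phi_eq M hMsymm u uh (L (Pi.single j 1)), ← hP,
      dot_symm_mulVec (by
        rw [hP]
        unfold Matrix.IsSymm
        rw [Matrix.transpose_sum]
        exact Finset.sum_congr rfl fun j' _ => by rw [Matrix.transpose_smul, (hMsymm j').eq]),
      heig1, smul_dotProduct, smul_eq_mul]
  have hsum2 : ∑ j', ((M j' *ᵥ u) ⬝ᵥ u) * ((Pi.single j 1 : Fin n → ℝ) j')
      = u ⬝ᵥ (M j *ᵥ u) := by
    rw [Finset.sum_eq_single j]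
    · simp [dot_symm_mulVec (hMsymm j)]
    · intro b _ hb; simp [Pi.single_apply, hb]
    · simp
  rw [Finset.sum_add_distrib, hsum1, hsum2, hnorm1] at hDe
  linarith
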